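/- If the homographic map D(h) = (ah+b)(ch+d)⁻¹ (a,b,c,d ∈ ℍ, ad - bc invertible) is defined at two double numbers h₁, h₂ lying on a common cone (i.e., h₁ - h₂ is a zero divisor or zero), then D(h₁) - D(h₂) is also a zero divisor or zero; i.e., homographic maps send cones into cones. -/

import Mathlib

noncomputable section

/-- Double numbers ℝ[j]/(j²-1), modeled as ℝ × ℝ with componentwise operations. -/
abbrev DoubleNum := ℝ × ℝ

/-- The hyperbolic imaginary unit `j`, satisfying `j * j = 1`. -/
def jd : DoubleNum := (1, -1)

/-- The double number `t + j·x`. -/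
def hmk (t x : ℝ) : DoubleNum := t • (1 : DoubleNum) + x • jd

/-- Conjugation: `t + j·x ↦ t - j·x`. -/
def hconj (h : DoubleNum) : DoubleNum := (h.2, h.1)

/-- Real part of a double number. -/
def hre (h : DoubleNum) : ℝ := (h.1 + h.2) / 2

/-- Imaginary part of a double number. -/
def him (h : DoubleNum) : ℝ := (h.1 - h.2) / 2


/-- The homographic map `h ↦ (a h + b) (c h + d)⁻¹` on double numbers. -/
def homog (a b c d : DoubleNum) (h : DoubleNum) : DoubleNum :=
  (a * h + b) * (c * h + d)⁻¹

/-- Homographic maps send cones into cones: if `h₁ - h₂` has zero hyperbolic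
squared modulus (is zero or a zero divisor), then so does `D(h₁) - D(h₂)`. -/
theorem double_homog_preserves_cones (a b c d : DoubleNum)
    (hdet : IsUnit (a * d - b * c)) (h₁ h₂ : DoubleNum)
    (hu1 : IsUnit (c * h₁ + d)) (hu2 : IsUnit (c * h₂ + d))
    (hz : (h₁ - h₂) * hconj (h₁ - h₂) = 0) :
    (homog a b c d h₁ - homog a b c d h₂) *
      hconj (homog a b c d h₁ - homog a b c d h₂) = 0 := by
  have comp : ∀ p : DoubleNum, IsUnit p → p.1 ≠ 0 ∧ p.2 ≠ 0 := by
    rintro p hp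
    obtain ⟨v, hv⟩ := hp.exists_right_inv
    have h1 : p.1 * v.1 = 1 := congrArg Prod.fst hv
    have h2 : p.2 * v.2 = 1 := congrArg Prod.snd hv
    exact ⟨left_ne_zero_of_mul_eq_one h1, left_ne_zero_of_mul_eq_one h2⟩
  obtain ⟨p1, p2⟩ := comp _ hu1
  obtain ⟨q1, q2⟩ := comp _ hu2
  have k1 : (h₁.1 - h₂.1) * (h₁.2 - h₂.2) = 0 := by
    have := congrArg Prod.fst hz
    simpa [hconj, Prod.fst_mul, Prod.fst_sub] using this
  simp only [homog, hconj, Prod.ext_iff, Prod.fst_mul, Prod.snd_mul, Prod.fst_add,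
    Prod.snd_add, Prod.fst_sub, Prod.snd_sub, Prod.fst_inv, Prod.snd_inv, Prod.fst_zero,
    Prod.snd_zero]
  simp only [Prod.fst_mul, Prod.fst_add, Prod.snd_mul, Prod.snd_add] at p1 p2 q1 q2
  have p1' : h₁.1 * c.1 + d.1 ≠ 0 := by rwa [mul_comm]
  have p2' : h₁.2 * c.2 + d.2 ≠ 0 := by rwa [mul_comm]
  have q1' : h₂.1 * c.1 + d.1 ≠ 0 := by rwa [mul_comm]
  have q2' : h₂.2 * c.2 + d.2 ≠ 0 := by rwa [mul_comm]
  constructor <;> field_simp <;>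
    linear_combination (a.1*d.1 - b.1*c.1)*(a.2*d.2 - b.2*c.2)*k1
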